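/- Let θ₁ ≤ θ₂ ≤ θ₃ be real numbers with θ₃ − θ₁ ≤ 3π/2, and let a_j = (cos θ_j, sin θ_j) ∈ ℝ² for j = 1, 2, 3 (points on the unit circle, with the Euclidean norm on ℝ²). Then ‖a₁ − a₂‖₂ + ‖a₂ − a₃‖₂ ≤ 4·sin(3π/8). -/

import Mathlib

open Real

lemma chord_eq (θ φ : ℝ) (v w : EuclideanSpace ℝ (Fin 2))
    (hv : v = ![Real.cos θ, Real.sin θ]) (hw : w = ![Real.cos φ, Real.sin φ]) :
    ‖v - w‖ = 2 * |Real.sin ((θ - φ) / 2)| := by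
  have hv0 : v 0 = Real.cos θ := by simpa using congrFun hv 0
  have hv1 : v 1 = Real.sin θ := by simpa using congrFun hv 1
  have hw0 : w 0 = Real.cos φ := by simpa using congrFun hw 0
  have hw1 : w 1 = Real.sin φ := by simpa using congrFun hw 1
  rw [EuclideanSpace.norm_eq]
  have h : ∑ i, ‖(v - w) i‖ ^ 2
      = (2 * |Real.sin ((θ - φ) / 2)|) ^ 2 := by
    simp only [Fin.sum_univ_two, PiLp.sub_apply, hv0, hv1, hw0, hw1, Real.norm_eq_abs, sq_abs]
    have hs : Real.sin ((θ - φ) / 2) ^ 2 = (1 - Real.cos (θ - φ)) / 2 := by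
      have h1 := Real.cos_sq ((θ - φ) / 2)
      have h2 := Real.sin_sq_add_cos_sq ((θ - φ) / 2)
      have h3 : 2 * ((θ - φ) / 2) = θ - φ := by ring
      rw [h3] at h1
      linarith
    have hc : Real.cos (θ - φ) = Real.cos θ * Real.cos φ + Real.sin θ * Real.sin φ :=
      Real.cos_sub θ φ
    have h1 : Real.sin θ ^ 2 + Real.cos θ ^ 2 = 1 := Real.sin_sq_add_cos_sq θ
    have h2 : Real.sin φ ^ 2 + Real.cos φ ^ 2 = 1 := Real.sin_sq_add_cos_sq φ
    nlinarith [sq_abs (Real.sin ((θ - φ) / 2))]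
  rw [h, Real.sqrt_sq (by positivity)]

/-- For three points on the unit circle with angular span at most `3π/2`,
the sum of the lengths of the two consecutive chords is at most `4 sin(3π/8)`. -/
theorem stmt_3 (θ₁ θ₂ θ₃ : ℝ) (h12 : θ₁ ≤ θ₂) (h23 : θ₂ ≤ θ₃)
    (hspan : θ₃ - θ₁ ≤ 3 * π / 2)
    (a : ℝ → EuclideanSpace ℝ (Fin 2))
    (ha : ∀ θ, a θ = ![Real.cos θ, Real.sin θ]) :
    ‖a θ₁ - a θ₂‖ + ‖a θ₂ - a θ₃‖ ≤ 4 * Real.sin (3 * π / 8) := by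
  rw [chord_eq θ₁ θ₂ _ _ (ha θ₁) (ha θ₂), chord_eq θ₂ θ₃ _ _ (ha θ₂) (ha θ₃)]
  set α := (θ₂ - θ₁) / 2 with hα
  set β := (θ₃ - θ₂) / 2 with hβ
  have hπ := Real.pi_pos
  have hα0 : 0 ≤ α := by simp [hα]; linarith
  have hβ0 : 0 ≤ β := by simp [hβ]; linarith
  have hsum : α + β ≤ 3 * π / 4 := by simp [hα, hβ]; linarith
  have habs1 : |Real.sin ((θ₁ - θ₂) / 2)| = Real.sin α := by
    have : (θ₁ - θ₂) / 2 = -α := by ring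
    rw [this, Real.sin_neg, abs_neg, abs_of_nonneg]
    · exact Real.sin_nonneg_of_nonneg_of_le_pi hα0 (by linarith)
  have habs2 : |Real.sin ((θ₂ - θ₃) / 2)| = Real.sin β := by
    have : (θ₂ - θ₃) / 2 = -β := by ring
    rw [this, Real.sin_neg, abs_neg, abs_of_nonneg]
    · exact Real.sin_nonneg_of_nonneg_of_le_pi hβ0 (by linarith)
  rw [habs1, habs2]
  -- sin α + sin β = 2 sin((α+β)/2) cos((α-β)/2) ≤ 2 sin(3π/8)
  have hkey : Real.sin α + Real.sin β
      = 2 * Real.sin ((α + β) / 2) * Real.cos ((α - β) / 2) := by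
    have h1 := Real.sin_add ((α + β) / 2) ((α - β) / 2)
    have h2 := Real.sin_sub ((α + β) / 2) ((α - β) / 2)
    have e1 : (α + β) / 2 + (α - β) / 2 = α := by ring
    have e2 : (α + β) / 2 - (α - β) / 2 = β := by ring
    rw [e1] at h1; rw [e2] at h2
    linarith
  have hsin_le : Real.sin ((α + β) / 2) ≤ Real.sin (3 * π / 8) := by
    apply Real.sin_le_sin_of_le_of_le_pi_div_two (by linarith) (by linarith)
    linarith
  have hsin0 : 0 ≤ Real.sin ((α + β) / 2) :=
    Real.sin_nonneg_of_nonneg_of_le_pi (by linarith) (by linarith)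
  have hcos1 : Real.cos ((α - β) / 2) ≤ 1 := Real.cos_le_one _
  have hcos0 : 0 ≤ Real.cos ((α - β) / 2) := by
    apply Real.cos_nonneg_of_mem_Icc
    constructor <;> [skip; skip] <;> nlinarith
  calc 2 * Real.sin α + 2 * Real.sin β
      = 2 * (2 * Real.sin ((α + β) / 2) * Real.cos ((α - β) / 2)) := by linarith
    _ ≤ 2 * (2 * Real.sin (3 * π / 8) * 1) := by
        apply mul_le_mul_of_nonneg_left _ (by norm_num)
        have := mul_le_mul hsin_le hcos1 hcos0 (by
          have : (0:ℝ) ≤ Real.sin (3 * π / 8) :=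
            Real.sin_nonneg_of_nonneg_of_le_pi (by linarith) (by linarith)
          exact this)
        nlinarith
    _ = 4 * Real.sin (3 * π / 8) := by ring
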